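/- Let (X_i,κ_i) be nonempty digital images, 1≤i≤v, and let u be an integer with 1≤u≤v. If (Π_{i=1}^v X_i, NP_u(κ_1,…,κ_v)) has the approximate fixed point property, then (X_i,κ_i) has the approximate fixed point property for every i. -/

import Mathlib

/-- `(κ,λ)`-continuity: adjacent points have equal or adjacent images. -/
def DContinuous {X Y : Type*} (κ : X → X → Prop) (lam : Y → Y → Prop)
    (f : X → Y) : Prop :=
  ∀ x x', κ x x' → f x = f x' ∨ lam (f x) (f x')

/-- The adjacency `NP_u(κ_1,…,κ_v)` on `Π_{i=1}^v X_i`: `p` and `q` are adjacent iff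
`p i` and `q i` are `κ i`-adjacent for at least 1 and at most `u` indices `i`, and
`p i = q i` for all other indices. -/
def NPu {v : ℕ} {X : Fin v → Type*} (u : ℕ) (κ : ∀ i, X i → X i → Prop)
    (p q : ∀ i, X i) : Prop :=
  1 ≤ {i | κ i (p i) (q i)}.ncard ∧ {i | κ i (p i) (q i)}.ncard ≤ u ∧
    ∀ i, ¬ κ i (p i) (q i) → p i = q i

/-- `(X,κ)` has the approximate fixed point property (AFPP): every `(κ,κ)`-continuous
`f : X → X` has a point `x` with `f x` equal or `κ`-adjacent to `x`. -/
def AFPP {X : Type*} (κ : X → X → Prop) : Prop :=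
  ∀ f : X → X, DContinuous κ κ f → ∃ x, f x = x ∨ κ (f x) x

/-- if `1 ≤ u ≤ v` and `(Π X_i, NP_u(κ_1,…,κ_v))` has the AFPP, then every
`(X_i,κ_i)` has the AFPP (each `X_i` nonempty). -/
theorem stmt15 (v u : ℕ) (hu1 : 1 ≤ u) (huv : u ≤ v) (X : Fin v → Type*)
    (κ : ∀ i, X i → X i → Prop)
    (hκi : ∀ i x, ¬ κ i x x) (hκs : ∀ i x y, κ i x y → κ i y x)
    (hne : ∀ i, Nonempty (X i))
    (hAFPP : AFPP (NPu u κ)) :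
    ∀ i, AFPP (κ i) := by
  intro i f hf
  classical
  set F : (∀ j, X j) → (∀ j, X j) := fun p => Function.update p i (f (p i)) with hF
  -- F is NPu-continuous
  have hFc : DContinuous (NPu u κ) (NPu u κ) F := by
    intro p q ⟨h1, h2, h3⟩
    set S : Set (Fin v) := {j | κ j (p j) (q j)} with hS
    set T : Set (Fin v) := {j | κ j (F p j) (F q j)} with hT
    have hTS : T ⊆ S := by
      intro j hj
      by_cases hji : j = i
      · subst hji
        simp only [hT, hF, Set.mem_setOf_eq, Function.update_self] at hj
        by_contra hjS
        have := h3 j hjS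
        rw [this] at hj
        exact hκi j _ hj
      · simpa only [hS, hT, hF, Set.mem_setOf_eq, Function.update_of_ne hji] using hj
    have hTeq : ∀ j, j ∉ T → F p j = F q j := by
      intro j hj
      by_cases hji : j = i
      · subst hji
        simp only [hT, hF, Set.mem_setOf_eq, Function.update_self] at hj ⊢
        by_cases hjS : κ j (p j) (q j)
        · rcases hf _ _ hjS with h | h
          · exact h
          · exact absurd h hj
        · rw [h3 j hjS]
      · simp only [hT, hF, Set.mem_setOf_eq, Function.update_of_ne hji] at hj ⊢
        by_cases hjS : κ j (p j) (q j)
        · exact absurd hjS hj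
        · exact h3 j hjS
    by_cases hTne : T.Nonempty
    · right
      refine ⟨?_, ?_, hTeq⟩
      · exact (Set.ncard_pos (Set.toFinite T)).mpr hTne
      · exact le_trans (Set.ncard_le_ncard hTS (Set.toFinite S)) h2
    · left
      funext j
      exact hTeq j (fun h => hTne ⟨j, h⟩)
  obtain ⟨p, hp⟩ := hAFPP F hFc
  rcases hp with hp | ⟨h1, _, _⟩
  · refine ⟨p i, Or.inl ?_⟩
    have := congrFun hp i
    simpa only [hF, Function.update_self] using this
  · refine ⟨p i, Or.inr ?_⟩
    have hsub : {j | κ j (F p j) (p j)} ⊆ {i} := by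
      intro j hj
      by_contra hji
      simp only [Set.mem_singleton_iff] at hji
      simp only [Set.mem_setOf_eq, hF, Function.update_of_ne hji] at hj
      exact hκi j _ hj
    have hne' : {j | κ j (F p j) (p j)}.Nonempty := by
      rw [← Set.ncard_pos (Set.toFinite _)]
      exact h1
    obtain ⟨j, hj⟩ := hne'
    have hji : j = i := hsub hj
    subst hji
    simpa only [Set.mem_setOf_eq, hF, Function.update_self] using hj
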